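/- Let n ≥ 1 and let A ∈ ℂ^{n×n} be upper bidiagonal, i.e., A_{ij} = 0 unless j = i or j = i + 1. If all the superdiagonal entries A_{i,i+1} (i = 1,…,n−1) are nonzero, then for every λ ∈ ℂ that is not an eigenvalue of A, the n eigenvalues of the Hermitian matrix (λI − A)ᴴ(λI − A) are pairwise distinct; i.e., all singular values of λI − A are simple. -/

import Mathlib

open Matrix

private lemma tridiag_eigvec_zero {n : ℕ} (B : Matrix (Fin n) (Fin n) ℂ)
    (hBz : ∀ i j : Fin n, ¬((j : ℕ) = (i : ℕ) ∨ (j : ℕ) = (i : ℕ) + 1) → B i j = 0)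
    (hBd : ∀ i : Fin n, B i i ≠ 0)
    (hBs : ∀ i j : Fin n, (j : ℕ) = (i : ℕ) + 1 → B i j ≠ 0)
    (v : Fin n → ℂ) (μ : ℂ) (hv : (Bᴴ * B) *ᵥ v = μ • v)
    (hn : 0 < n) (h0 : v ⟨0, hn⟩ = 0) : v = 0 := by
  have H : ∀ k : ℕ, ∀ hk : k < n, v ⟨k, hk⟩ = 0 := by
    intro k
    induction k using Nat.strong_induction_on with
    | _ k IH =>
      intro hk
      match k, hk, IH with
      | 0, hk, _ => exact h0
      | (m+1), hk, IH =>
        have hm : m < n := Nat.lt_of_succ_lt hk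
        have row := congrFun hv ⟨m, hm⟩
        rw [mulVec, dotProduct] at row
        have hvm : v ⟨m, hm⟩ = 0 := IH m (Nat.lt_succ_self m) hm
        rw [Pi.smul_apply, hvm, smul_zero] at row
        have hsum : ∀ q : Fin n, q ≠ ⟨m+1, hk⟩ → (Bᴴ * B) ⟨m, hm⟩ q * v q = 0 := by
          intro q hq
          rcases le_or_gt (q : ℕ) m with hle | hgt
          · rw [show q = ⟨(q:ℕ), q.2⟩ from rfl, IH q (Nat.lt_succ_of_le hle) q.2, mul_zero]
          · have hq2 : m + 2 ≤ (q : ℕ) := by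
              rcases Nat.lt_or_ge (q : ℕ) (m+2) with h | h
              · exact absurd (Fin.ext (show (q:ℕ) = m+1 by omega)) hq
              · exact h
            have hM : (Bᴴ * B) ⟨m, hm⟩ q = 0 := by
              rw [Matrix.mul_apply]
              apply Finset.sum_eq_zero
              intro l _
              rw [Matrix.conjTranspose_apply]
              by_cases hl : (m : ℕ) = (l : ℕ) ∨ (m : ℕ) = (l : ℕ) + 1
              · have : B l q = 0 := hBz l q (by omega)
                rw [this, mul_zero]
              · have : B l ⟨m, hm⟩ = 0 := hBz l ⟨m, hm⟩ (by simpa using hl)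
                rw [this, star_zero, zero_mul]
            rw [hM, zero_mul]
        rw [Finset.sum_eq_single ⟨m+1, hk⟩ (fun q _ => hsum q) (by simp)] at row
        have hside : ∀ l ∈ Finset.univ, l ≠ (⟨m, hm⟩ : Fin n) →
            Bᴴ ⟨m, hm⟩ l * B l ⟨m+1, hk⟩ = 0 := by
          intro l _ hl
          rw [Matrix.conjTranspose_apply]
          have hlm : (l : ℕ) ≠ m := fun h => hl (Fin.ext (by simpa using h.symm)).symm
          by_cases hl2 : (m : ℕ) = (l : ℕ) + 1
          · have : B l ⟨m+1, hk⟩ = 0 := hBz l ⟨m+1, hk⟩ (by simp; omega)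
            rw [this, mul_zero]
          · have : B l ⟨m, hm⟩ = 0 := hBz l ⟨m, hm⟩ (by simp; omega)
            rw [this, star_zero, zero_mul]
        have hM1 : (Bᴴ * B) ⟨m, hm⟩ ⟨m+1, hk⟩ = star (B ⟨m, hm⟩ ⟨m, hm⟩) * B ⟨m, hm⟩ ⟨m+1, hk⟩ := by
          rw [Matrix.mul_apply, Finset.sum_eq_single (⟨m, hm⟩ : Fin n) hside (by simp),
            Matrix.conjTranspose_apply]
        have hne : (Bᴴ * B) ⟨m, hm⟩ ⟨m+1, hk⟩ ≠ 0 := by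
          rw [hM1]
          exact mul_ne_zero (star_ne_zero.mpr (hBd _)) (hBs _ _ rfl)
        exact (mul_eq_zero.mp row).resolve_left hne
  funext x
  exact H x x.2

/-- The eigenvalues (squares of the singular values) of `λI - A`, i.e. the eigenvalues
of the Hermitian matrix `(λI - A)ᴴ (λI - A)`, counted with multiplicity. -/
noncomputable def sqSingVals {n : ℕ} (A : Matrix (Fin n) (Fin n) ℂ) (lam : ℂ) :
    Fin n → ℝ :=
  (Matrix.isHermitian_conjTranspose_mul_self
    (lam • (1 : Matrix (Fin n) (Fin n) ℂ) - A)).eigenvalues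

/-- If `A` is upper bidiagonal with all superdiagonal entries nonzero, then for every
`λ` that is not an eigenvalue of `A`, all the singular values of `λI - A` are simple:
the `n` eigenvalues of `(λI - A)ᴴ (λI - A)` are pairwise distinct. -/
theorem bidiagonal_singular_values_simple
    {n : ℕ} (hn : 1 ≤ n) (A : Matrix (Fin n) (Fin n) ℂ)
    (hbd : ∀ i j : Fin n, ¬(j = i ∨ (j : ℕ) = (i : ℕ) + 1) → A i j = 0)
    (hsup : ∀ i j : Fin n, (j : ℕ) = (i : ℕ) + 1 → A i j ≠ 0) :
    ∀ lam : ℂ, lam ∉ spectrum ℂ A → Function.Injective (sqSingVals A lam) := by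
  intro lam hlam i j hij
  by_contra hne
  set B : Matrix (Fin n) (Fin n) ℂ := lam • (1 : Matrix (Fin n) (Fin n) ℂ) - A with hBdef
  have hBz : ∀ i j : Fin n, ¬((j : ℕ) = (i : ℕ) ∨ (j : ℕ) = (i : ℕ) + 1) → B i j = 0 := by
    intro i j h
    push_neg at h
    have hji : j ≠ i := fun e => h.1 (by rw [e])
    have hA0 : A i j = 0 := hbd i j (by push_neg; exact ⟨fun e => hji e, h.2⟩)
    have h1 : (1 : Matrix (Fin n) (Fin n) ℂ) i j = 0 := Matrix.one_apply_ne (fun e => hji e.symm)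
    simp [hBdef, Matrix.sub_apply, Matrix.smul_apply, h1, hA0]
  have hBs : ∀ i j : Fin n, (j : ℕ) = (i : ℕ) + 1 → B i j ≠ 0 := by
    intro i j h
    have hij : i ≠ j := fun e => by rw [e] at h; omega
    have h1 : (1 : Matrix (Fin n) (Fin n) ℂ) i j = 0 := Matrix.one_apply_ne hij
    simp [hBdef, Matrix.sub_apply, Matrix.smul_apply, h1, hsup i j h]
  have hunit : IsUnit B := by
    have := spectrum.notMem_iff.mp hlam
    rwa [show (algebraMap ℂ (Matrix (Fin n) (Fin n) ℂ)) lam - A = B by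
      rw [hBdef, Algebra.algebraMap_eq_smul_one]] at this
  have hdet : B.det ≠ 0 := ((Matrix.isUnit_iff_isUnit_det B).mp hunit).ne_zero
  have htri : B.BlockTriangular id := by
    intro i j hij
    exact hBz i j (by simp at hij ⊢; omega)
  have hBd : ∀ i : Fin n, B i i ≠ 0 := by
    intro i hi
    rw [Matrix.det_of_upperTriangular htri] at hdet
    exact hdet (Finset.prod_eq_zero (Finset.mem_univ i) hi)
  -- eigenvector setup
  have hH : (Bᴴ * B).IsHermitian := Matrix.isHermitian_conjTranspose_mul_self B
  have heig : hH.eigenvalues i = hH.eigenvalues j := hij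
  set μ : ℂ := (hH.eigenvalues i : ℂ) with hμ
  set v : Fin n → ℂ := ⇑(hH.eigenvectorBasis i) with hvdef
  set w : Fin n → ℂ := ⇑(hH.eigenvectorBasis j) with hwdef
  have hv : (Bᴴ * B) *ᵥ v = μ • v := by
    rw [hvdef, hH.mulVec_eigenvectorBasis i]
    funext k
    simp [Complex.real_smul, hμ]
  have hμj : μ = (hH.eigenvalues j : ℂ) := by rw [hμ, heig]
  have hw : (Bᴴ * B) *ᵥ w = μ • w := by
    rw [hwdef, hH.mulVec_eigenvectorBasis j, hμj]
    funext k
    simp [Complex.real_smul]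
  set z0 : Fin n := ⟨0, hn⟩ with hz0
  set u : Fin n → ℂ := w z0 • v - v z0 • w with hudef
  have hu : (Bᴴ * B) *ᵥ u = μ • u := by
    rw [hudef, mulVec_sub, mulVec_smul, mulVec_smul, hv, hw, smul_sub,
      smul_comm μ (w z0), smul_comm μ (v z0)]
  have hu0 : u z0 = 0 := by
    simp [hudef, mul_comm]
  have huz : u = 0 := tridiag_eigvec_zero B hBz hBd hBs u μ hu hn hu0
  have heq : w z0 • v = v z0 • w := sub_eq_zero.mp huz
  have hON := hH.eigenvectorBasis.orthonormal
  have hOI := orthonormal_iff_ite.mp hON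
  have heqE : w z0 • (hH.eigenvectorBasis i) = v z0 • (hH.eigenvectorBasis j) := by
    ext k; have := congrFun heq k; simpa [hvdef, hwdef] using this
  have h1 : w z0 = 0 := by
    have h := congrArg (fun x : EuclideanSpace ℂ (Fin n) =>
      (inner ℂ (hH.eigenvectorBasis i) x : ℂ)) heqE
    simpa [inner_smul_right, hOI, hne] using h
  have h2 : v z0 = 0 := by
    have h := congrArg (fun x : EuclideanSpace ℂ (Fin n) =>
      (inner ℂ (hH.eigenvectorBasis j) x : ℂ)) heqE
    simpa [inner_smul_right, hOI, hne, (Ne.symm hne : j ≠ i)] using h.symm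
  have hvz : v = 0 := tridiag_eigvec_zero B hBz hBd hBs v μ hv hn h2
  exact hON.ne_zero i (by ext k; exact congrFun hvz k)
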